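/- Let (X, σ) be a CAM ℤ-system and let φ : X → Y be a factor map onto a ℤ-system (Y, τ). If the ℤ-action on Y is faithful, then (Y, τ) is a CAM ℤ-system. -/

import Mathlib

/-- Let `(X, σ)` be a CAM ℤ-system and `φ : X → Y` a factor map onto a ℤ-system
`(Y, τ)`. If the ℤ-action on `Y` is faithful, then `(Y, τ)` is CAM.
A ℤ-system is CAM if it is faithful, topologically transitive, has dense periodic
points, and has no proper infinite subsystem. -/
theorem stmt4 {X : Type*} [MetricSpace X] [CompactSpace X] [Nonempty X] (σ : X ≃ₜ X)
    {Y : Type*} [MetricSpace Y] [CompactSpace Y] [Nonempty Y] (τ : Y ≃ₜ Y)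
    (φ : X → Y) (hφc : Continuous φ) (hφs : Function.Surjective φ)
    (hφeq : ∀ x : X, φ (σ x) = τ (φ x))
    -- X is CAM:
    (hXfaith : ∀ n : ℕ, 1 ≤ n → ∃ x : X, (⇑σ)^[n] x ≠ x)
    (hXtrans : ∀ U V : Set X, IsOpen U → IsOpen V → U.Nonempty → V.Nonempty →
      ∃ n : ℤ, ((σ.toEquiv ^ n) '' U ∩ V).Nonempty)
    (hXper : Dense {x : X | ∃ n : ℕ, 1 ≤ n ∧ (⇑σ)^[n] x = x})
    (hXmin : ∀ Z : Set X, Z.Nonempty → IsClosed Z →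
      (∀ n : ℤ, (σ.toEquiv ^ n) '' Z ⊆ Z) → Z.Infinite → Z = Set.univ)
    -- Y is faithful:
    (hYfaith : ∀ n : ℕ, 1 ≤ n → ∃ y : Y, (⇑τ)^[n] y ≠ y) :
    -- then Y is CAM:
    (∀ n : ℕ, 1 ≤ n → ∃ y : Y, (⇑τ)^[n] y ≠ y) ∧
    (∀ U V : Set Y, IsOpen U → IsOpen V → U.Nonempty → V.Nonempty →
      ∃ n : ℤ, ((τ.toEquiv ^ n) '' U ∩ V).Nonempty) ∧
    Dense {y : Y | ∃ n : ℕ, 1 ≤ n ∧ (⇑τ)^[n] y = y} ∧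
    (∀ Z : Set Y, Z.Nonempty → IsClosed Z →
      (∀ n : ℤ, (τ.toEquiv ^ n) '' Z ⊆ Z) → Z.Infinite → Z = Set.univ) := by
  -- commutation for iterates
  have hiter : ∀ (n : ℕ) (x : X), φ ((⇑σ)^[n] x) = (⇑τ)^[n] (φ x) := by
    intro n
    induction n with
    | zero => intro x; simp
    | succ n ih =>
      intro x
      rw [Function.iterate_succ_apply', Function.iterate_succ_apply', hφeq, ih]
  have hsymm : ∀ x : X, φ (σ.symm x) = τ.symm (φ x) := by
    intro x
    have := hφeq (σ.symm x)
    rw [σ.apply_symm_apply] at this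
    rw [this, τ.symm_apply_apply]
  have hz : ∀ (n : ℤ) (x : X), φ ((σ.toEquiv ^ n) x) = (τ.toEquiv ^ n) (φ x) := by
    intro n
    induction n using Int.induction_on with
    | zero => intro x; simp
    | succ n ih =>
      intro x
      have h1 : ((σ.toEquiv : Equiv.Perm X) ^ ((n : ℤ) + 1)) x
          = (σ.toEquiv ^ (n : ℤ)) (σ.toEquiv x) := by
        rw [zpow_add_one]; rfl
      have h2 : ((τ.toEquiv : Equiv.Perm Y) ^ ((n : ℤ) + 1)) (φ x)
          = (τ.toEquiv ^ (n : ℤ)) (τ.toEquiv (φ x)) := by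
        rw [zpow_add_one]; rfl
      rw [h1, h2, ih]
      exact congrArg _ (hφeq x)
    | pred n ih =>
      intro x
      have h1 : ((σ.toEquiv : Equiv.Perm X) ^ (-(n : ℤ) - 1)) x
          = (σ.toEquiv ^ (-(n : ℤ))) (σ.toEquiv⁻¹ x) := by
        rw [zpow_sub_one]; rfl
      have h2 : ((τ.toEquiv : Equiv.Perm Y) ^ (-(n : ℤ) - 1)) (φ x)
          = (τ.toEquiv ^ (-(n : ℤ))) (τ.toEquiv⁻¹ (φ x)) := by
        rw [zpow_sub_one]; rfl
      have hinv : φ (σ.toEquiv⁻¹ x) = τ.toEquiv⁻¹ (φ x) := hsymm x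
      rw [h1, h2, ih, hinv]
  refine ⟨hYfaith, ?_, ?_, ?_⟩
  · -- transitivity
    intro U V hU hV hUne hVne
    obtain ⟨n, x, ⟨x', hx'U, hx'⟩, hxV⟩ :=
      hXtrans (φ ⁻¹' U) (φ ⁻¹' V) (hU.preimage hφc) (hV.preimage hφc)
        (hφs.nonempty_preimage.mpr hUne) (hφs.nonempty_preimage.mpr hVne)
    refine ⟨n, φ x, ⟨φ x', hx'U, ?_⟩, hxV⟩
    rw [← hz n x', hx']
  · -- dense periodic points
    have hsub : φ '' {x : X | ∃ n : ℕ, 1 ≤ n ∧ (⇑σ)^[n] x = x}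
        ⊆ {y : Y | ∃ n : ℕ, 1 ≤ n ∧ (⇑τ)^[n] y = y} := by
      rintro y ⟨x, ⟨n, hn, hx⟩, rfl⟩
      exact ⟨n, hn, by rw [← hiter n x, hx]⟩
    refine Dense.mono hsub ?_
    intro y
    have hcl : φ '' closure {x : X | ∃ n : ℕ, 1 ≤ n ∧ (⇑σ)^[n] x = x}
        ⊆ closure (φ '' {x : X | ∃ n : ℕ, 1 ≤ n ∧ (⇑σ)^[n] x = x}) :=
      image_closure_subset_closure_image hφc
    rw [hXper.closure_eq] at hcl
    obtain ⟨x, rfl⟩ := hφs y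
    exact hcl ⟨x, trivial, rfl⟩
  · -- no proper infinite subsystem
    intro Z hZne hZcl hZinv hZinf
    set W := φ ⁻¹' Z with hW
    have hWne : W.Nonempty := hφs.nonempty_preimage.mpr hZne
    have hWcl : IsClosed W := hZcl.preimage hφc
    have hWinv : ∀ n : ℤ, (σ.toEquiv ^ n) '' W ⊆ W := by
      rintro n x ⟨x', hx', rfl⟩
      show φ ((σ.toEquiv ^ n) x') ∈ Z
      rw [hz n x']
      exact hZinv n ⟨φ x', hx', rfl⟩
    have hWinf : W.Infinite := by
      have : Z ⊆ φ '' W := by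
        rw [hW, Set.image_preimage_eq Z hφs]
      exact Set.Infinite.of_image φ (hZinf.mono this)
    have := hXmin W hWne hWcl hWinv hWinf
    have : Z = φ '' W := (Set.image_preimage_eq Z hφs).symm
    rw [this, hXmin W hWne hWcl hWinv hWinf, Set.image_univ, hφs.range_eq]
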